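/- If L is a self-centralizing Lie algebra possessing a nontrivial ideal I of finite dimension n > 1, then dim(L) ≤ n². -/

import Mathlib

def lieCentralizer (k : Type) {L : Type} [Field k] [LieRing L] [LieAlgebra k L]
    (l : L) : Submodule k L where
  carrier := {x | ⁅l, x⁆ = 0}
  add_mem' := by
    intro a b ha hb
    simp only [Set.mem_setOf_eq] at *
    rw [lie_add, ha, hb, add_zero]
  zero_mem' := by simp
  smul_mem' := by
    intro c x hx
    simp only [Set.mem_setOf_eq] at *
    rw [lie_smul, hx, smul_zero]

attribute [local instance] LieRing.ofAssociativeRing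

theorem stmt3 {k L : Type} [Field k] [CharZero k] [LieRing L] [LieAlgebra k L]
    (hsc : ∀ l : L, l ≠ 0 → Module.rank k (lieCentralizer k l) = 1)
    (I : LieIdeal k L) (hI0 : I ≠ ⊥) (hIT : I ≠ ⊤)
    [Module.Finite k I] (n : ℕ) (hn : 1 < n) (hdim : Module.finrank k I = n) :
    Module.rank k L ≤ (n : Cardinal) ^ 2 := by
  set φ : L →ₗ[k] Module.End k I := (LieModule.toEnd k L I).toLinearMap with hφ
  have hinj : Function.Injective φ := by
    rw [← LinearMap.ker_eq_bot, LinearMap.ker_eq_bot']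
    intro x hx
    by_contra hx0
    have hsub : (I : Submodule k L) ≤ lieCentralizer k x := by
      intro y hy
      have h := LinearMap.congr_fun hx ⟨y, hy⟩
      have h2 : ⁅x, y⁆ = (0 : L) := congrArg Subtype.val h
      simpa [lieCentralizer] using h2
    have h1 : Module.rank k I ≤ 1 := by
      rw [← hsc x hx0]
      exact Submodule.rank_mono hsub
    have h2 : (Module.rank k I) = n := by
      rw [← hdim, Module.finrank_eq_rank]
    rw [h2] at h1
    have := hn.trans_le (by exact_mod_cast Nat.cast_le.mp (by exact_mod_cast h1))
    exact absurd this (lt_irrefl _)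
  calc Module.rank k L ≤ Module.rank k (Module.End k I) := φ.rank_le_of_injective hinj
    _ = (n : Cardinal) ^ 2 := by
        rw [← Module.finrank_eq_rank]
        rw [show Module.finrank k (Module.End k I) = n * n by
          rw [Module.finrank_linearMap, hdim]]
        push_cast
        ring
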